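/- Let m ≥ 3, θ > 0, and let H ≥ 2. For pairwise-distinct-coordinate weight, one has ∑_{h ∈ {1,…,H}^m, coordinates not all equal} max_{t ≤ m} ∏_{ℓ ≤ m, ℓ ≠ t, h_ℓ ≠ h_t} |h_ℓ − h_t|^{−1/m} ≪ H^{(m−1) + 1/m} (log H)^{(m−2)/m}, where the implied constant depends only on m. -/

import Mathlib

open Finset


lemma aux_sum_rpow (m : ℕ) (hm : 3 ≤ m) :
    ∀ H : ℕ, ∑ d ∈ Finset.Icc 1 H, (d : ℝ) ^ (-(1:ℝ)/m) ≤ m * (H : ℝ) ^ (1 - 1/(m:ℝ)) := by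
  have hm0 : (0:ℝ) < m := by exact_mod_cast (by omega : 0 < m)
  have hm1 : (1:ℝ) ≤ m := by exact_mod_cast (by omega : 1 ≤ m)
  have hβ0 : (0:ℝ) ≤ 1 - 1/(m:ℝ) := by
    rw [sub_nonneg, div_le_one hm0]; exact hm1
  have hβp : (0:ℝ) < 1 - 1/(m:ℝ) := by
    rw [sub_pos, div_lt_one hm0]; exact_mod_cast (by omega : 1 < m)
  have hm2 : (2:ℝ) ≤ m := by exact_mod_cast (by omega : 2 ≤ m)
  have hβ1 : (1:ℝ) - 1/(m:ℝ) ≤ 1 := by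
    have : (0:ℝ) ≤ 1/(m:ℝ) := by positivity
    linarith
  intro H
  induction H with
  | zero =>
      simp only [Nat.cast_zero]
      rw [Finset.Icc_eq_empty (by omega), Finset.sum_empty,
        Real.zero_rpow hβp.ne', mul_zero]
  | succ H ih =>
      rw [Finset.sum_Icc_succ_top (by omega : 1 ≤ H + 1)]
      have hH0 : (0:ℝ) ≤ (H:ℝ) := Nat.cast_nonneg H
      have hx1 : (1:ℝ) ≤ (H:ℝ) + 1 := by linarith
      have hx0 : (0:ℝ) < (H:ℝ) + 1 := by positivity
      have hd1 : 1/((H:ℝ)+1) ≤ 1 := by rw [div_le_one hx0]; linarith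
      have hbern : ((1:ℝ) + (-(1/((H:ℝ)+1)))) ^ (1 - 1/(m:ℝ))
          ≤ 1 + (1 - 1/(m:ℝ)) * (-(1/((H:ℝ)+1))) := by
        apply rpow_one_add_le_one_add_mul_self (by linarith) hβ0 hβ1
      have h1 : (1:ℝ) + (-(1/((H:ℝ)+1))) = (H:ℝ)/((H:ℝ)+1) := by field_simp; ring
      rw [h1] at hbern
      have h2 : ((H:ℝ)/((H:ℝ)+1)) ^ (1 - 1/(m:ℝ)) * (((H:ℝ)+1) ^ (1 - 1/(m:ℝ)))
          = (H:ℝ) ^ (1 - 1/(m:ℝ)) := by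
        rw [← Real.mul_rpow (by positivity) (by positivity)]
        congr 1
        field_simp
      have h3 : ((H:ℝ)+1) ^ (-(1:ℝ)/m) = ((H:ℝ)+1) ^ (1 - 1/(m:ℝ)) / ((H:ℝ)+1) := by
        have : (-(1:ℝ)/m) = (1 - 1/(m:ℝ)) - 1 := by ring
        rw [this, Real.rpow_sub hx0, Real.rpow_one]
      have hmul := mul_le_mul_of_nonneg_right hbern
        (Real.rpow_nonneg (le_of_lt hx0) (1 - 1/(m:ℝ)))
      rw [h2] at hmul
      -- hmul : H^β ≤ (1 + β * (-(1/(H+1)))) * (H+1)^β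
      have key : (H:ℝ) ^ (1 - 1/(m:ℝ)) ≤ ((H:ℝ)+1) ^ (1 - 1/(m:ℝ))
          - (1 - 1/(m:ℝ)) * (((H:ℝ)+1) ^ (-(1:ℝ)/m)) := by
        rw [h3]
        calc (H:ℝ) ^ (1 - 1/(m:ℝ))
            ≤ (1 + (1 - 1/(m:ℝ)) * (-(1/((H:ℝ)+1)))) * (((H:ℝ)+1) ^ (1 - 1/(m:ℝ))) := hmul
          _ = ((H:ℝ)+1) ^ (1 - 1/(m:ℝ))
              - (1 - 1/(m:ℝ)) * (((H:ℝ)+1) ^ (1 - 1/(m:ℝ)) / ((H:ℝ)+1)) := by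
              field_simp; ring
      have hmb : (m:ℝ) * (1 - 1/(m:ℝ)) = (m:ℝ) - 1 := by field_simp
      have hnn : (0:ℝ) ≤ ((H:ℝ)+1) ^ (-(1:ℝ)/m) := Real.rpow_nonneg (le_of_lt hx0) _
      have hkm := mul_le_mul_of_nonneg_left key (le_of_lt hm0)
      have h4 : (m:ℝ) * (((H:ℝ)+1)^(1-1/(m:ℝ)) - (1-1/(m:ℝ)) * (((H:ℝ)+1)^(-(1:ℝ)/m)))
          = m*(((H:ℝ)+1)^(1-1/(m:ℝ))) - ((m:ℝ)-1)*(((H:ℝ)+1)^(-(1:ℝ)/m)) := by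
        rw [mul_sub, ← mul_assoc, hmb]
      push_cast
      nlinarith [hkm, ih, hnn, h4, hm2]

lemma aux_row (m : ℕ) (hm : 3 ≤ m) (H : ℕ) {b : ℕ} (hb : b ∈ Finset.Icc 1 H) :
    ∑ a ∈ Finset.Icc 1 H, (if a = b then (1:ℝ) else |(a:ℝ) - (b:ℝ)| ^ (-(1:ℝ)/m))
      ≤ 1 + 2 * m * (H:ℝ) ^ (1 - 1/(m:ℝ)) := by
  rw [← Finset.add_sum_erase _ _ hb, if_pos rfl]
  simp only [Finset.mem_Icc] at hb
  gcongr 1 + ?_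
  have hsplit : (Finset.Icc 1 H).erase b
      = ((Finset.Icc 1 H).filter (· < b)) ∪ ((Finset.Icc 1 H).filter (b < ·)) := by
    ext a
    simp only [Finset.mem_erase, Finset.mem_Icc, Finset.mem_union, Finset.mem_filter]
    omega
  have hdisj : Disjoint ((Finset.Icc 1 H).filter (· < b)) ((Finset.Icc 1 H).filter (b < ·)) := by
    rw [Finset.disjoint_left]
    intro a h1 h2
    simp only [Finset.mem_filter] at h1 h2
    omega
  rw [hsplit, Finset.sum_union hdisj]
  have hnn : ∀ d ∈ Finset.Icc 1 H, (0:ℝ) ≤ (d:ℝ) ^ (-(1:ℝ)/m) := by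
    intro d _; positivity
  have hpart : ∀ (φ : ℕ → ℕ) (s : Finset ℕ), s ⊆ Finset.Icc 1 H →
      (∀ a ∈ s, φ a ∈ Finset.Icc 1 H) → (Set.InjOn φ s) →
      (∀ a ∈ s, a ≠ b) →
      (∀ a ∈ s, |(a:ℝ) - (b:ℝ)| = (φ a : ℝ)) →
      ∑ a ∈ s, (if a = b then (1:ℝ) else |(a:ℝ) - (b:ℝ)| ^ (-(1:ℝ)/m))
        ≤ m * (H:ℝ) ^ (1 - 1/(m:ℝ)) := by
    intro φ s hsub hmaps hinj hne habs
    calc ∑ a ∈ s, (if a = b then (1:ℝ) else |(a:ℝ) - (b:ℝ)| ^ (-(1:ℝ)/m))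
        = ∑ a ∈ s, ((φ a : ℝ)) ^ (-(1:ℝ)/m) := by
          refine Finset.sum_congr rfl fun a ha => ?_
          rw [if_neg (hne a ha), habs a ha]
      _ = ∑ d ∈ s.image φ, (d:ℝ) ^ (-(1:ℝ)/m) := (Finset.sum_image (f := fun d : ℕ => (d:ℝ) ^ (-(1:ℝ)/m)) (g := φ)
            fun a ha c hc h => hinj ha hc h).symm
      _ ≤ ∑ d ∈ Finset.Icc 1 H, (d:ℝ) ^ (-(1:ℝ)/m) := by
          apply Finset.sum_le_sum_of_subset_of_nonneg
          · intro d hd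
            obtain ⟨a, ha, rfl⟩ := Finset.mem_image.mp hd
            exact hmaps a ha
          · intro d hd _; positivity
      _ ≤ m * (H:ℝ) ^ (1 - 1/(m:ℝ)) := aux_sum_rpow m hm H
  have h1 := hpart (fun a => b - a) ((Finset.Icc 1 H).filter (· < b))
    (Finset.filter_subset _ _)
    (by intro a ha; simp only [Finset.mem_filter, Finset.mem_Icc] at ha ⊢; omega)
    (by intro a ha c hc h; simp only [Finset.coe_filter, Set.mem_setOf_eq,
          Finset.mem_Icc] at ha hc; simp only [] at h; omega)
    (by intro a ha; simp only [Finset.mem_filter] at ha; omega)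
    (by intro a ha
        simp only [Finset.mem_filter, Finset.mem_Icc] at ha
        rw [abs_sub_comm, Nat.cast_sub (by omega), abs_of_nonneg]
        have : (a:ℝ) ≤ b := by exact_mod_cast ha.2.le
        linarith)
  have h2 := hpart (fun a => a - b) ((Finset.Icc 1 H).filter (b < ·))
    (Finset.filter_subset _ _)
    (by intro a ha; simp only [Finset.mem_filter, Finset.mem_Icc] at ha ⊢; omega)
    (by intro a ha c hc h; simp only [Finset.coe_filter, Set.mem_setOf_eq,
          Finset.mem_Icc] at ha hc; simp only [] at h; omega)
    (by intro a ha; simp only [Finset.mem_filter] at ha; omega)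
    (by intro a ha
        simp only [Finset.mem_filter, Finset.mem_Icc] at ha
        rw [Nat.cast_sub (by omega), abs_of_nonneg]
        have : (b:ℝ) ≤ a := by exact_mod_cast ha.2.le
        linarith)
  linarith


lemma aux_factor {n : ℕ} (t : Fin n) (S : Finset ℕ) {b : ℕ} (hb : b ∈ S) (g : ℕ → ℝ) :
    ∑ h ∈ (Fintype.piFinset fun _ : Fin n => S).filter (fun h => h t = b),
      ∏ ℓ ∈ Finset.univ.erase t, g (h ℓ)
    = ∏ ℓ ∈ Finset.univ.erase t, ∑ a ∈ S, g a := by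
  classical
  have hset : (Fintype.piFinset fun _ : Fin n => S).filter (fun h => h t = b)
      = Fintype.piFinset (Function.update (fun _ : Fin n => S) t {b}) := by
    ext h
    simp only [Finset.mem_filter, Fintype.mem_piFinset]
    constructor
    · rintro ⟨h1, h2⟩ ℓ
      by_cases hℓ : ℓ = t
      · subst hℓ; simp [Function.update_self, h2]
      · simpa [Function.update_of_ne hℓ] using h1 ℓ
    · intro h1
      refine ⟨fun ℓ => ?_, ?_⟩
      · by_cases hℓ : ℓ = t
        · subst hℓ
          have := h1 ℓ
          rw [Function.update_self] at this
          simp only [Finset.mem_singleton] at this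
          rw [this]; exact hb
        · simpa [Function.update_of_ne hℓ] using h1 ℓ
      · have := h1 t
        rw [Function.update_self] at this
        simpa using this
  rw [hset]
  set F : Fin n → ℕ → ℝ := fun ℓ a => if ℓ = t then (1:ℝ) else g a with hF
  calc ∑ h ∈ Fintype.piFinset (Function.update (fun _ : Fin n => S) t {b}),
        ∏ ℓ ∈ Finset.univ.erase t, g (h ℓ)
      = ∑ h ∈ Fintype.piFinset (Function.update (fun _ : Fin n => S) t {b}),
        ∏ ℓ, F ℓ (h ℓ) := by
        refine Finset.sum_congr rfl fun h _ => ?_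
        have e1 : ∏ ℓ ∈ Finset.univ.erase t, F ℓ (h ℓ) = ∏ ℓ, F ℓ (h ℓ) :=
          Finset.prod_erase Finset.univ (if_pos rfl)
        rw [← e1]
        exact Finset.prod_congr rfl fun ℓ hℓ =>
          (if_neg (Finset.mem_erase.mp hℓ).1).symm
    _ = ∏ ℓ, ∑ a ∈ Function.update (fun _ : Fin n => S) t {b} ℓ, F ℓ a :=
        (Finset.prod_univ_sum _ _).symm
    _ = ∏ ℓ ∈ Finset.univ.erase t, ∑ a ∈ S, g a := by
        have e2 : ∏ ℓ ∈ Finset.univ.erase t,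
              (∑ a ∈ Function.update (fun _ : Fin n => S) t {b} ℓ, F ℓ a)
            = ∏ ℓ, ∑ a ∈ Function.update (fun _ : Fin n => S) t {b} ℓ, F ℓ a :=
          Finset.prod_erase Finset.univ (by simp [hF])
        rw [← e2]
        refine Finset.prod_congr rfl fun ℓ hℓ => ?_
        have hne := (Finset.mem_erase.mp hℓ).1
        rw [Function.update_of_ne hne]
        exact Finset.sum_congr rfl fun a _ => if_neg hne

theorem stmt_10 (m : ℕ) (hm : 3 ≤ m) (θ : ℝ) (hθ : 0 < θ) :
    ∃ C : ℝ, 0 < C ∧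
      ∀ H : ℕ, 2 ≤ H →
        ∑ h ∈ (Fintype.piFinset fun _ : Fin m => Finset.Icc 1 H).filter
            (fun h => ¬ ∀ i j : Fin m, h i = h j),
          (Finset.univ.sup' ⟨⟨0, by omega⟩, Finset.mem_univ _⟩ fun t =>
            ∏ ℓ ∈ Finset.univ.filter (fun ℓ : Fin m => ℓ ≠ t ∧ h ℓ ≠ h t),
              |(h ℓ : ℝ) - (h t : ℝ)| ^ (-(1 : ℝ) / m)) ≤
          C * (H : ℝ) ^ ((m : ℝ) - 1 + 1 / m) *
            Real.log H ^ (((m : ℝ) - 2) / m) := by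
  classical
  have hm0 : (0:ℝ) < m := by exact_mod_cast (by omega : 0 < m)
  have hexp0 : (0:ℝ) ≤ ((m:ℝ) - 2) / m := by
    apply div_nonneg _ hm0.le
    have : (2:ℝ) ≤ m := by exact_mod_cast (by omega : 2 ≤ m)
    linarith
  have hlog2 : (0:ℝ) < Real.log 2 := Real.log_pos one_lt_two
  set C₁ : ℝ := m * (3 * m) ^ (m - 1) with hC₁
  have hC₁0 : 0 < C₁ := by positivity
  refine ⟨C₁ / (Real.log 2) ^ (((m:ℝ) - 2) / m), by positivity, ?_⟩
  intro H hH
  set gg : ℕ → ℕ → ℝ := fun a b => if a = b then (1:ℝ) else |(a:ℝ) - (b:ℝ)| ^ (-(1:ℝ)/m)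
    with hgg
  have hggnn : ∀ a b, 0 ≤ gg a b := by
    intro a b
    simp only [hgg]
    split <;> positivity
  -- pointwise rewrite of the product
  have hpoint : ∀ (h : Fin m → ℕ) (t : Fin m),
      ∏ ℓ ∈ Finset.univ.filter (fun ℓ : Fin m => ℓ ≠ t ∧ h ℓ ≠ h t),
        |(h ℓ : ℝ) - (h t : ℝ)| ^ (-(1 : ℝ) / m)
      = ∏ ℓ ∈ Finset.univ.erase t, gg (h ℓ) (h t) := by
    intro h t
    rw [← Finset.filter_ne' Finset.univ t, Finset.prod_filter, Finset.prod_filter]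
    refine Finset.prod_congr rfl fun ℓ _ => ?_
    by_cases h1 : ℓ = t
    · simp [h1]
    · by_cases h2 : h ℓ = h t
      · simp [h1, h2, hgg]
      · simp [h1, h2, hgg]
  have hKnn : (0:ℝ) ≤ 1 + 2 * m * (H:ℝ) ^ (1 - 1/(m:ℝ)) := by positivity
  -- the main estimate for fixed t
  have hfix : ∀ t : Fin m,
      ∑ h ∈ Fintype.piFinset (fun _ : Fin m => Finset.Icc 1 H),
        ∏ ℓ ∈ Finset.univ.erase t, gg (h ℓ) (h t)
      ≤ (H:ℝ) * (1 + 2 * m * (H:ℝ) ^ (1 - 1/(m:ℝ))) ^ (m - 1) := by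
    intro t
    have hmaps : ∀ h ∈ Fintype.piFinset (fun _ : Fin m => Finset.Icc 1 H),
        h t ∈ Finset.Icc 1 H := fun h hh => Fintype.mem_piFinset.mp hh t
    rw [← Finset.sum_fiberwise_of_maps_to hmaps]
    have hcard : (Finset.univ.erase t).card = m - 1 := by
      rw [Finset.card_erase_of_mem (Finset.mem_univ t), Finset.card_univ, Fintype.card_fin]
    calc ∑ b ∈ Finset.Icc 1 H,
          ∑ h ∈ (Fintype.piFinset fun _ : Fin m => Finset.Icc 1 H).filter
              (fun h => h t = b),
            ∏ ℓ ∈ Finset.univ.erase t, gg (h ℓ) (h t)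
        = ∑ b ∈ Finset.Icc 1 H,
          ∏ ℓ ∈ Finset.univ.erase t, ∑ a ∈ Finset.Icc 1 H, gg a b := by
          refine Finset.sum_congr rfl fun b hb => ?_
          rw [← aux_factor t _ hb (fun a => gg a b)]
          refine Finset.sum_congr rfl fun h hh => ?_
          have : h t = b := (Finset.mem_filter.mp hh).2
          rw [this]
      _ ≤ ∑ b ∈ Finset.Icc 1 H, (1 + 2 * m * (H:ℝ) ^ (1 - 1/(m:ℝ))) ^ (m - 1) := by
          refine Finset.sum_le_sum fun b hb => ?_
          calc ∏ ℓ ∈ Finset.univ.erase t, ∑ a ∈ Finset.Icc 1 H, gg a b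
              ≤ ∏ _ℓ ∈ Finset.univ.erase t, (1 + 2 * m * (H:ℝ) ^ (1 - 1/(m:ℝ))) := by
                refine Finset.prod_le_prod (fun ℓ _ => Finset.sum_nonneg fun a _ => hggnn a b)
                  (fun ℓ _ => aux_row m hm H hb)
            _ = (1 + 2 * m * (H:ℝ) ^ (1 - 1/(m:ℝ))) ^ (m - 1) := by
                rw [Finset.prod_const, hcard]
      _ = (H:ℝ) * (1 + 2 * m * (H:ℝ) ^ (1 - 1/(m:ℝ))) ^ (m - 1) := by
          rw [Finset.sum_const, Nat.card_Icc]
          simp [nsmul_eq_mul]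
  -- combine
  have hstep1 :
      ∑ h ∈ (Fintype.piFinset fun _ : Fin m => Finset.Icc 1 H).filter
          (fun h => ¬ ∀ i j : Fin m, h i = h j),
        (Finset.univ.sup' ⟨⟨0, by omega⟩, Finset.mem_univ _⟩ fun t =>
          ∏ ℓ ∈ Finset.univ.filter (fun ℓ : Fin m => ℓ ≠ t ∧ h ℓ ≠ h t),
            |(h ℓ : ℝ) - (h t : ℝ)| ^ (-(1 : ℝ) / m))
      ≤ ∑ t : Fin m, ∑ h ∈ Fintype.piFinset (fun _ : Fin m => Finset.Icc 1 H),
          ∏ ℓ ∈ Finset.univ.erase t, gg (h ℓ) (h t) := by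
    rw [Finset.sum_comm]
    calc _ ≤ ∑ h ∈ (Fintype.piFinset fun _ : Fin m => Finset.Icc 1 H).filter
            (fun h => ¬ ∀ i j : Fin m, h i = h j),
          ∑ t : Fin m, ∏ ℓ ∈ Finset.univ.erase t, gg (h ℓ) (h t) := by
          refine Finset.sum_le_sum fun h _ => ?_
          apply Finset.sup'_le
          intro t _
          rw [hpoint h t]
          exact Finset.single_le_sum
            (f := fun t' : Fin m => ∏ ℓ ∈ Finset.univ.erase t', gg (h ℓ) (h t'))
            (fun t' _ => Finset.prod_nonneg fun ℓ _ => hggnn _ _) (Finset.mem_univ t)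
      _ ≤ ∑ h ∈ Fintype.piFinset (fun _ : Fin m => Finset.Icc 1 H),
          ∑ t : Fin m, ∏ ℓ ∈ Finset.univ.erase t, gg (h ℓ) (h t) := by
          apply Finset.sum_le_sum_of_subset_of_nonneg (Finset.filter_subset _ _)
          intro h _ _
          exact Finset.sum_nonneg fun t _ =>
            Finset.prod_nonneg fun ℓ _ => hggnn _ _
  have hstep2 : ∑ t : Fin m, ∑ h ∈ Fintype.piFinset (fun _ : Fin m => Finset.Icc 1 H),
        ∏ ℓ ∈ Finset.univ.erase t, gg (h ℓ) (h t)
      ≤ m * ((H:ℝ) * (1 + 2 * m * (H:ℝ) ^ (1 - 1/(m:ℝ))) ^ (m - 1)) := by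
    calc _ ≤ ∑ _t : Fin m, (H:ℝ) * (1 + 2 * m * (H:ℝ) ^ (1 - 1/(m:ℝ))) ^ (m - 1) :=
          Finset.sum_le_sum fun t _ => hfix t
      _ = m * ((H:ℝ) * (1 + 2 * m * (H:ℝ) ^ (1 - 1/(m:ℝ))) ^ (m - 1)) := by
          rw [Finset.sum_const, Finset.card_univ, Fintype.card_fin, nsmul_eq_mul]
  -- numeric endgame
  have hH0 : (0:ℝ) < H := by exact_mod_cast (by omega : 0 < H)
  have hH1 : (1:ℝ) ≤ H := by exact_mod_cast (by omega : 1 ≤ H)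
  have hβ0 : (0:ℝ) ≤ 1 - 1/(m:ℝ) := by
    rw [sub_nonneg, div_le_one hm0]; exact_mod_cast (by omega : 1 ≤ m)
  have hHβ1 : (1:ℝ) ≤ (H:ℝ) ^ (1 - 1/(m:ℝ)) := Real.one_le_rpow hH1 hβ0
  have hK3 : 1 + 2 * m * (H:ℝ) ^ (1 - 1/(m:ℝ)) ≤ 3 * m * (H:ℝ) ^ (1 - 1/(m:ℝ)) := by
    have h1m : (1:ℝ) ≤ m := by exact_mod_cast (by omega : 1 ≤ m)
    nlinarith [mul_le_mul h1m hHβ1 zero_le_one hm0.le]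
  have hKpow : (1 + 2 * m * (H:ℝ) ^ (1 - 1/(m:ℝ))) ^ (m - 1)
      ≤ (3 * m) ^ (m - 1) * ((H:ℝ) ^ (1 - 1/(m:ℝ))) ^ (m - 1) := by
    rw [← mul_pow]
    exact pow_le_pow_left₀ hKnn hK3 _
  have hHpow : ((H:ℝ) ^ (1 - 1/(m:ℝ))) ^ (m - 1) = (H:ℝ) ^ ((1 - 1/(m:ℝ)) * (m - 1 : ℕ)) := by
    rw [← Real.rpow_natCast ((H:ℝ) ^ (1 - 1/(m:ℝ))) (m - 1), ← Real.rpow_mul hH0.le]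
  have hexpeq : (1:ℝ) + (1 - 1/(m:ℝ)) * ((m - 1 : ℕ) : ℝ) = (m:ℝ) - 1 + 1/m := by
    have : ((m - 1 : ℕ) : ℝ) = (m:ℝ) - 1 := by
      rw [Nat.cast_sub (by omega)]; norm_num
    rw [this]
    field_simp
    ring
  have hfinal : m * ((H:ℝ) * (1 + 2 * m * (H:ℝ) ^ (1 - 1/(m:ℝ))) ^ (m - 1))
      ≤ C₁ * (H:ℝ) ^ ((m:ℝ) - 1 + 1/m) := by
    calc m * ((H:ℝ) * (1 + 2 * m * (H:ℝ) ^ (1 - 1/(m:ℝ))) ^ (m - 1))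
        ≤ m * ((H:ℝ) * ((3 * m) ^ (m - 1) * ((H:ℝ) ^ (1 - 1/(m:ℝ))) ^ (m - 1))) := by
          have := mul_le_mul_of_nonneg_left hKpow hH0.le
          exact mul_le_mul_of_nonneg_left this hm0.le
      _ = C₁ * ((H:ℝ) * (H:ℝ) ^ ((1 - 1/(m:ℝ)) * ((m - 1 : ℕ) : ℝ))) := by
          rw [hHpow, hC₁]; ring
      _ = C₁ * (H:ℝ) ^ ((m:ℝ) - 1 + 1/m) := by
          rw [← hexpeq, Real.rpow_add hH0, Real.rpow_one]
  have hlogmono : (Real.log 2) ^ (((m:ℝ) - 2) / m) ≤ (Real.log H) ^ (((m:ℝ) - 2) / m) := by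
    apply Real.rpow_le_rpow hlog2.le _ hexp0
    apply Real.log_le_log (by norm_num)
    exact_mod_cast hH
  calc _ ≤ m * ((H:ℝ) * (1 + 2 * m * (H:ℝ) ^ (1 - 1/(m:ℝ))) ^ (m - 1)) :=
        le_trans hstep1 hstep2
    _ ≤ C₁ * (H:ℝ) ^ ((m:ℝ) - 1 + 1/m) := hfinal
    _ = (C₁ / (Real.log 2) ^ (((m:ℝ) - 2) / m)) * (H:ℝ) ^ ((m:ℝ) - 1 + 1/m)
          * (Real.log 2) ^ (((m:ℝ) - 2) / m) := by
        have hL : (0:ℝ) < (Real.log 2) ^ (((m:ℝ) - 2) / m) :=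
          Real.rpow_pos_of_pos hlog2 _
        rw [div_mul_eq_mul_div, div_mul_cancel₀ _ hL.ne']
    _ ≤ (C₁ / (Real.log 2) ^ (((m:ℝ) - 2) / m)) * (H:ℝ) ^ ((m:ℝ) - 1 + 1/m)
          * (Real.log H) ^ (((m:ℝ) - 2) / m) := by
        apply mul_le_mul_of_nonneg_left hlogmono
        positivity
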